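/- The distribution law rewriting relation on microCCS processes is strongly normalising: there is no infinite sequence of rewrite steps. -/

import Mathlib

/-- CCS visible actions: a name `a` or a coname `ā`. -/
inductive Act where
  | inp : ℕ → Act
  | out : ℕ → Act
deriving DecidableEq

/-- The coaction. -/
def Act.co : Act → Act
  | .inp a => .out a
  | .out a => .inp a

/-- MicroCCS processes: nil, prefix, parallel composition. -/
inductive Proc where
  | nil : Proc
  | pre : Act → Proc → Proc
  | par : Proc → Proc → Proc
deriving DecidableEq

/-- Transition labels: a visible action or τ. -/
inductive Lab where
  | act : Act → Lab
  | tau : Lab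
deriving DecidableEq

/-- The standard CCS labelled transition system on microCCS. -/
inductive Step : Proc → Lab → Proc → Prop where
  | pre (η : Act) (P : Proc) : Step (.pre η P) (.act η) P
  | syn {P P' Q Q' : Proc} {η : Act} :
      Step P (.act η) P' → Step Q (.act η.co) Q' →
      Step (.par P Q) .tau (.par P' Q')
  | parL {P P' : Proc} {μ : Lab} (Q : Proc) :
      Step P μ P' → Step (.par P Q) μ (.par P' Q)
  | parR {Q Q' : Proc} {μ : Lab} (P : Proc) :
      Step Q μ Q' → Step (.par P Q) μ (.par P Q')

/-- A (symmetric) bisimulation. -/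
def IsBisim (R : Proc → Proc → Prop) : Prop :=
  (∀ P Q, R P Q → R Q P) ∧
  ∀ P Q μ P', R P Q → Step P μ P' → ∃ Q', Step Q μ Q' ∧ R P' Q'

/-- Strong bisimilarity: the union of all bisimulations. -/
def Bisim (P Q : Proc) : Prop := ∃ R, IsBisim R ∧ R P Q

/-- The size of a process: its number of prefixes. -/
def Proc.size : Proc → ℕ
  | .nil => 0
  | .pre _ P => 1 + P.size
  | .par P Q => P.size + Q.size

/-- Structural congruence: abelian monoid laws for parallel composition. -/
inductive SC : Proc → Proc → Prop where
  | refl (P) : SC P P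
  | symm : SC P Q → SC Q P
  | trans : SC P Q → SC Q R → SC P R
  | comm (P Q) : SC (.par P Q) (.par Q P)
  | assoc (P Q R) : SC (.par P (.par Q R)) (.par (.par P Q) R)
  | unit (P) : SC (.par P .nil) P
  | pre (η) : SC P Q → SC (.pre η P) (.pre η Q)
  | par : SC P P' → SC Q Q' → SC (.par P Q) (.par P' Q')

/-- `pow P k` is the k-fold parallel composition of `P`. -/
def pow (P : Proc) : ℕ → Proc
  | 0 => .nil
  | n+1 => .par P (pow P n)

/-- One step of rewriting with the distribution law
    `η.(P ‖ (η.P)^k) ⇝ (η.P)^{k+1}` (k ≥ 1), modulo structural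
    congruence, in any context. -/
inductive RW : Proc → Proc → Prop where
  | head {η : Act} {P : Proc} {k : ℕ} (hk : 1 ≤ k) :
      RW (.pre η (.par P (pow (.pre η P) k))) (pow (.pre η P) (k+1))
  | pre (η) : RW P P' → RW (.pre η P) (.pre η P')
  | parL (Q) : RW P P' → RW (.par P Q) (.par P' Q)
  | parR (P) : RW Q Q' → RW (.par P Q) (.par P Q')
  | congr : SC P P₁ → RW P₁ P₂ → SC P₂ P' → RW P P'

/-- Reflexive-transitive closure of the distribution rewriting. -/
def Rws : Proc → Proc → Prop := Relation.ReflTransGen RW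

/-- Normal forms for the distribution rewriting. -/
def NF (P : Proc) : Prop := ¬ ∃ P', RW P P'

/-- Prime processes. -/
def IsPrime (P : Proc) : Prop :=
  ¬ Bisim P .nil ∧ ∀ Q R, Bisim P (.par Q R) → Bisim Q .nil ∨ Bisim R .nil

/-- Weight: sum over prefixes of their depth. -/
def Proc.weight : Proc → ℕ
  | .nil => 0
  | .pre _ P => 1 + P.size + P.weight
  | .par P Q => P.weight + Q.weight

lemma sc_size {P Q : Proc} (h : SC P Q) : P.size = Q.size := by
  induction h <;> (try simp [Proc.size] at *) <;> omega

lemma sc_weight {P Q : Proc} (h : SC P Q) : P.weight = Q.weight := by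
  induction h with
  | refl => rfl
  | symm _ ih => omega
  | trans _ _ ih1 ih2 => omega
  | comm P Q => simp [Proc.weight]; omega
  | assoc P Q R => simp [Proc.weight]; omega
  | unit P => simp [Proc.weight]
  | pre η h ih => simp [Proc.weight, sc_size h, ih]
  | par h1 h2 ih1 ih2 => simp [Proc.weight]; omega

lemma pow_size (P : Proc) (k : ℕ) : (pow P k).size = k * P.size := by
  induction k with
  | zero => simp [pow, Proc.size]
  | succ n ih => simp [pow, Proc.size, ih]; ring

lemma pow_weight (P : Proc) (k : ℕ) : (pow P k).weight = k * P.weight := by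
  induction k with
  | zero => simp [pow, Proc.weight]
  | succ n ih => simp [pow, Proc.weight, ih]; ring

lemma rw_size {P Q : Proc} (h : RW P Q) : P.size = Q.size := by
  induction h with
  | head hk => simp [Proc.size, pow_size]; ring
  | pre η h ih => simp [Proc.size, ih]
  | parL Q h ih => simp [Proc.size, ih]
  | parR P h ih => simp [Proc.size, ih]
  | congr h1 h2 h3 ih => rw [sc_size h1, ih, sc_size h3]

lemma rw_weight {P Q : Proc} (h : RW P Q) : Q.weight < P.weight := by
  induction h with
  | @head η P k hk =>
      simp [Proc.weight, Proc.size, pow_weight, pow_size]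
      nlinarith [P.size, P.weight]
  | pre η h ih => simp [Proc.weight, ← rw_size h]; omega
  | parL Q h ih => simp [Proc.weight]; omega
  | parR P h ih => simp [Proc.weight]; omega
  | congr h1 h2 h3 ih => rw [sc_weight h1, ← sc_weight h3]; exact ih

/-- the distribution-law rewriting is strongly normalising:
    there is no infinite sequence of rewrite steps. -/
theorem rw_strongly_normalising :
    ¬ ∃ f : ℕ → Proc, ∀ n, RW (f n) (f (n+1)) := by
  rintro ⟨f, hf⟩
  have key : ∀ n, Proc.weight (f n) + n ≤ Proc.weight (f 0) := by
    intro n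
    induction n with
    | zero => simp
    | succ n ih => have := rw_weight (hf n); omega
  have := key (Proc.weight (f 0) + 1)
  omega
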